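/- Jacobi determinant theorem: let F be a field, A an invertible n×n matrix over F, 1 ≤ k ≤ n, and I, J : Fin k → Fin n strictly monotone. Then det ((Matrix.adjugate A).submatrix I J) = C_{J,I} · (det A)^(k-1), i.e., det ((Matrix.adjugate A).submatrix I J) = (-1)^{∑ t ((I t : ℕ)+1) + ∑ t ((J t : ℕ)+1)} · det (A.submatrix Jᶜ Iᶜ) · (det A)^(k-1). -/

import Mathlib

/-- The unique strictly monotone map `Fin (n-k) → Fin n` whose range is the complement of
the range of an injective map `J : Fin k → Fin n`. -/
noncomputable def monoCompl {n k : ℕ} (J : Fin k → Fin n) (hJ : Function.Injective J) :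
    Fin (n - k) → Fin n :=
  (Finset.univ.image J)ᶜ.orderEmbOfFin (by
    rw [Finset.card_compl, Finset.card_image_of_injective _ hJ, Finset.card_univ,
      Fintype.card_fin, Fintype.card_fin])

/-- The generalized cofactor `C_{I,J}`: the signed determinant of the complementary
submatrix obtained by deleting the rows in `I` and the columns in `J`. -/
noncomputable def cofactor {F : Type*} [CommRing F] {n k : ℕ} (A : Matrix (Fin n) (Fin n) F)
    (I J : Fin k → Fin n) (hI : StrictMono I) (hJ : StrictMono J) : F :=
  (-1 : F) ^ (∑ t, ((I t : ℕ) + 1) + ∑ t, ((J t : ℕ) + 1)) *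
    (A.submatrix (monoCompl I hI.injective) (monoCompl J hJ.injective)).det

namespace JacobiAux

open Equiv Matrix Finset

variable {n k : ℕ}

lemma monoCompl_card (J : Fin k → Fin n) (hJ : Function.Injective J) :
    ((Finset.univ.image J)ᶜ).card = n - k := by
  rw [Finset.card_compl, Finset.card_image_of_injective _ hJ, Finset.card_univ,
    Fintype.card_fin, Fintype.card_fin]

lemma monoCompl_mem (J : Fin k → Fin n) (hJ : Function.Injective J) (s : Fin (n - k)) :
    monoCompl J hJ s ∈ (Finset.univ.image J)ᶜ :=
  Finset.orderEmbOfFin_mem _ _ _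

lemma monoCompl_ne (J : Fin k → Fin n) (hJ : Function.Injective J) (s : Fin (n - k))
    (t : Fin k) : monoCompl J hJ s ≠ J t := by
  have h := monoCompl_mem J hJ s
  simp only [Finset.mem_compl, Finset.mem_image] at h
  exact fun he => h ⟨t, Finset.mem_univ t, he.symm⟩

lemma monoCompl_strictMono (J : Fin k → Fin n) (hJ : Function.Injective J) :
    StrictMono (monoCompl J hJ) :=
  ((Finset.univ.image J)ᶜ.orderEmbOfFin _).strictMono

lemma strictMono_val_le {I : Fin k → Fin n} (hI : StrictMono I) (t : Fin k) :
    (t : ℕ) ≤ (I t : ℕ) := by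
  suffices h : ∀ (m : ℕ) (t : Fin k), t.1 = m → m ≤ (I t : ℕ) from h t.1 t rfl
  intro m
  induction m using Nat.strongRecOn with
  | ind m ih =>
    intro t ht
    rcases Nat.eq_zero_or_pos m with h0 | hpos
    · omega
    · have hmk : m - 1 < k := by have := t.isLt; omega
      have hlt : (⟨m - 1, hmk⟩ : Fin k) < t := by simp [Fin.lt_def]; omega
      have h1 := ih (m - 1) (by omega) ⟨m - 1, hmk⟩ rfl
      have h2 := hI hlt
      rw [Fin.lt_def] at h2
      omega

/-- The equivalence `Fin k ⊕ Fin (n-k) ≃ Fin n` built from a strictly monotone map and its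
complement. -/
noncomputable def sumEquiv (hk : k ≤ n) (I : Fin k → Fin n) (hI : StrictMono I) :
    Fin k ⊕ Fin (n - k) ≃ Fin n :=
  Equiv.ofBijective (Sum.elim I (monoCompl I hI.injective))
    ((Fintype.bijective_iff_injective_and_card _).2
      ⟨Function.Injective.sumElim hI.injective (monoCompl_strictMono I hI.injective).injective
        (fun t s => (monoCompl_ne I hI.injective s t).symm),
       by simp [Nat.add_sub_cancel' hk]⟩)

@[simp] lemma sumEquiv_inl (hk : k ≤ n) (I : Fin k → Fin n) (hI : StrictMono I) (t : Fin k) :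
    sumEquiv hk I hI (Sum.inl t) = I t := rfl

@[simp] lemma sumEquiv_inr (hk : k ≤ n) (I : Fin k → Fin n) (hI : StrictMono I)
    (s : Fin (n - k)) : sumEquiv hk I hI (Sum.inr s) = monoCompl I hI.injective s := rfl

@[simp] lemma sumEquiv_symm_inl (hk : k ≤ n) (I : Fin k → Fin n) (hI : StrictMono I)
    (t : Fin k) : (sumEquiv hk I hI).symm (I t) = Sum.inl t := by
  rw [Equiv.symm_apply_eq]; rfl

@[simp] lemma sumEquiv_symm_inr (hk : k ≤ n) (I : Fin k → Fin n) (hI : StrictMono I)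
    (s : Fin (n - k)) :
    (sumEquiv hk I hI).symm (monoCompl I hI.injective s) = Sum.inr s := by
  rw [Equiv.symm_apply_eq]; rfl

/-- canonical equivalence -/
noncomputable def gEquiv (hk : k ≤ n) : Fin k ⊕ Fin (n - k) ≃ Fin n :=
  finSumFinEquiv.trans (finCongr (Nat.add_sub_cancel' hk))

@[simp] lemma gEquiv_inl (hk : k ≤ n) (t : Fin k) : ((gEquiv hk (Sum.inl t)) : ℕ) = t := rfl

@[simp] lemma gEquiv_inr (hk : k ≤ n) (s : Fin (n - k)) :
    ((gEquiv hk (Sum.inr s)) : ℕ) = k + s := rfl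

/-- the shuffle permutation -/
noncomputable def shuffle (hk : k ≤ n) (I : Fin k → Fin n) (hI : StrictMono I) :
    Equiv.Perm (Fin n) :=
  (gEquiv hk).symm.trans (sumEquiv hk I hI)

lemma sign_shuffle_aux (hk : k ≤ n) :
    ∀ (N : ℕ) (I : Fin k → Fin n) (hI : StrictMono I),
      (∑ t, ((I t : ℕ) - (t : ℕ))) = N →
      Equiv.Perm.sign (shuffle hk I hI) = (-1) ^ (∑ t, ((I t : ℕ) + (t : ℕ))) := by
  intro N
  induction N with
  | zero =>
    intro I hI hsum
    have hval : ∀ t : Fin k, (I t : ℕ) = t := by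
      intro t
      have h1 := strictMono_val_le hI t
      have h2 := Finset.sum_eq_zero_iff.mp hsum t (Finset.mem_univ t)
      omega
    have hC : monoCompl I hI.injective = fun s => gEquiv hk (Sum.inr s) := by
      refine (Finset.orderEmbOfFin_unique (monoCompl_card I hI.injective) ?_ ?_).symm
      · intro s
        simp only [Finset.mem_compl, Finset.mem_image, not_exists]
        rintro t ⟨-, he⟩
        have := congrArg Fin.val he
        rw [hval t] at this
        simp only [gEquiv_inr] at this
        omega
      · intro s s' hss
        rw [Fin.lt_def]
        simpa using hss
    have hrefl : shuffle hk I hI = Equiv.refl _ := by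
      apply Equiv.ext; intro x
      obtain ⟨p, rfl⟩ := (gEquiv hk).surjective x
      simp only [shuffle, Equiv.trans_apply, Equiv.symm_apply_apply, Equiv.refl_apply]
      cases p with
      | inl t =>
        rw [sumEquiv_inl]
        exact Fin.ext (by rw [hval t, gEquiv_inl])
      | inr s =>
        rw [sumEquiv_inr, hC]
    rw [hrefl]
    have heven : Even (∑ t : Fin k, ((I t : ℕ) + (t : ℕ))) := by
      have : ∑ t : Fin k, ((I t : ℕ) + (t : ℕ)) = 2 * ∑ t : Fin k, (t : ℕ) := by
        rw [Finset.mul_sum]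
        exact Finset.sum_congr rfl fun t _ => by rw [hval t]; ring
      exact this ▸ even_two_mul _
    rw [heven.neg_one_pow]
    simp
  | succ N ih =>
    intro I hI hsum
    have hex : ∃ t : Fin k, (t : ℕ) < (I t : ℕ) := by
      by_contra h
      push_neg at h
      have hz : ∀ t : Fin k, (I t : ℕ) - (t : ℕ) = 0 := fun t => by have := h t; omega
      rw [Finset.sum_eq_zero fun t _ => hz t] at hsum
      omega
    set T := Finset.univ.filter (fun t : Fin k => (t : ℕ) < (I t : ℕ)) with hT
    have hTne : T.Nonempty := by
      obtain ⟨t, ht⟩ := hex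
      exact ⟨t, by simp [hT, ht]⟩
    set t₀ := T.min' hTne with ht₀def
    have ht₀ : (t₀ : ℕ) < (I t₀ : ℕ) := by
      have := T.min'_mem hTne
      simp only [hT, Finset.mem_filter] at this
      exact this.2
    have hmin : ∀ t : Fin k, t < t₀ → (I t : ℕ) = t := by
      intro t hlt
      have hnot : t ∉ T := fun hmem => absurd (T.min'_le t hmem) (not_le.mpr hlt)
      simp only [hT, Finset.mem_filter, Finset.mem_univ, true_and, not_lt] at hnot
      have := strictMono_val_le hI t
      omega
    have hbn := (I t₀).isLt
    set a : Fin n := ⟨(I t₀ : ℕ) - 1, by omega⟩ with ha_def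
    set b : Fin n := I t₀ with hb_def
    have hab : a ≠ b := by
      intro h
      have := congrArg Fin.val h
      simp [ha_def, hb_def] at this
      omega
    have haval : (a : ℕ) + 1 = (b : ℕ) := by simp [ha_def, hb_def]; omega
    have hat₀ : (t₀ : ℕ) ≤ (a : ℕ) := by simp [ha_def]; omega
    have ha_not : ∀ t : Fin k, I t ≠ a := by
      intro t h
      rcases lt_trichotomy t t₀ with hlt | rfl | hgt
      · have h1 := hmin t hlt
        have h2 : (t : ℕ) < (t₀ : ℕ) := hlt
        have := congrArg Fin.val h
        simp [ha_def] at this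
        omega
      · exact hab h.symm
      · have := hI hgt
        rw [Fin.lt_def] at this
        have := congrArg Fin.val h
        simp [ha_def] at this
        omega
    set I₂ := Function.update I t₀ a with hI₂def
    have hI₂t₀ : I₂ t₀ = a := Function.update_self _ _ _
    have hI₂ne : ∀ t, t ≠ t₀ → I₂ t = I t := fun t ht => Function.update_of_ne ht _ _
    have hI₂ : StrictMono I₂ := by
      intro t t' hlt
      rcases eq_or_ne t t₀ with rfl | ht
      · have ht' : t' ≠ t₀ := ne_of_gt hlt
        rw [hI₂t₀, hI₂ne t' ht', Fin.lt_def]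
        have := hI hlt
        rw [Fin.lt_def, ← hb_def] at this
        omega
      · rcases eq_or_ne t' t₀ with rfl | ht'
        · rw [hI₂t₀, hI₂ne t ht, Fin.lt_def]
          have h1 := hmin t hlt
          have h2 : (t : ℕ) < (t₀ : ℕ) := hlt
          omega
        · rw [hI₂ne t ht, hI₂ne t' ht']
          exact hI hlt
    set I' := monoCompl I hI.injective with hI'def
    have hI'b : ∀ s, I' s ≠ b := fun s => monoCompl_ne I hI.injective s t₀
    have hI'mono := monoCompl_strictMono I hI.injective
    have key : monoCompl I₂ hI₂.injective = fun s => Equiv.swap a b (I' s) := by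
      refine (Finset.orderEmbOfFin_unique (monoCompl_card I₂ hI₂.injective) ?_ ?_).symm
      · intro s
        simp only [Finset.mem_compl, Finset.mem_image, Finset.mem_univ, true_and, not_exists]
        intro t
        rcases eq_or_ne (I' s) a with h | h
        · rw [h, Equiv.swap_apply_left]
          rcases eq_or_ne t t₀ with rfl | ht
          · rw [hI₂t₀]; exact fun hh => hab hh
          · rw [hI₂ne t ht]
            intro hh
            exact ht (hI.injective (hh.trans hb_def.symm ▸ rfl))
        · rw [Equiv.swap_apply_of_ne_of_ne h (hI'b s)]
          rcases eq_or_ne t t₀ with rfl | ht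
          · rw [hI₂t₀]; exact fun hh => h hh.symm
          · rw [hI₂ne t ht]
            exact fun hh => monoCompl_ne I hI.injective s t hh.symm
      · intro s s' hss
        show Equiv.swap a b (I' s) < Equiv.swap a b (I' s')
        have h1 : I' s < I' s' := hI'mono hss
        rcases eq_or_ne (I' s) a with h | h
        · rw [h, Equiv.swap_apply_left]
          have h' : I' s' ≠ a := by
            intro hh; rw [hh, ← h] at h1; exact lt_irrefl _ h1
          rw [Equiv.swap_apply_of_ne_of_ne h' (hI'b s')]
          rw [Fin.lt_def]
          have hv1 : (a : ℕ) < (I' s' : ℕ) := by rw [← h]; exact h1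
          have hv2 : (I' s' : ℕ) ≠ (b : ℕ) := fun hh => hI'b s' (Fin.ext hh)
          omega
        · rw [Equiv.swap_apply_of_ne_of_ne h (hI'b s)]
          rcases eq_or_ne (I' s') a with h' | h'
          · rw [h', Equiv.swap_apply_left, Fin.lt_def]
            have hv1 : (I' s : ℕ) < (a : ℕ) := by rw [← h']; exact h1
            omega
          · rw [Equiv.swap_apply_of_ne_of_ne h' (hI'b s')]
            exact h1
    have hperm : shuffle hk I hI = (shuffle hk I₂ hI₂).trans (Equiv.swap a b) := by
      apply Equiv.ext; intro x
      obtain ⟨p, rfl⟩ := (gEquiv hk).surjective x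
      simp only [shuffle, Equiv.trans_apply, Equiv.symm_apply_apply]
      cases p with
      | inl t =>
        rw [sumEquiv_inl, sumEquiv_inl]
        rcases eq_or_ne t t₀ with rfl | ht
        · rw [hI₂t₀, Equiv.swap_apply_left, hb_def]
        · rw [hI₂ne t ht, Equiv.swap_apply_of_ne_of_ne (ha_not t)
            (fun hh => ht (hI.injective (hh.trans hb_def.symm ▸ rfl)))]
      | inr s =>
        rw [sumEquiv_inr, sumEquiv_inr, key]
        exact (Equiv.swap_apply_self _ _ _).symm
    have hs1 : ∑ t, ((I₂ t : ℕ) - (t : ℕ)) = N := by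
      have e1 : ((I₂ t₀ : ℕ) - (t₀ : ℕ)) + ∑ t ∈ Finset.univ.erase t₀, ((I₂ t : ℕ) - (t : ℕ))
          = ∑ t, ((I₂ t : ℕ) - (t : ℕ)) :=
        Finset.add_sum_erase Finset.univ (fun t : Fin k => (I₂ t : ℕ) - (t : ℕ)) (Finset.mem_univ t₀)
      have e2 : ((I t₀ : ℕ) - (t₀ : ℕ)) + ∑ t ∈ Finset.univ.erase t₀, ((I t : ℕ) - (t : ℕ))
          = ∑ t, ((I t : ℕ) - (t : ℕ)) :=
        Finset.add_sum_erase Finset.univ (fun t : Fin k => (I t : ℕ) - (t : ℕ)) (Finset.mem_univ t₀)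
      have e3 : ∑ t ∈ Finset.univ.erase t₀, ((I₂ t : ℕ) - (t : ℕ))
          = ∑ t ∈ Finset.univ.erase t₀, ((I t : ℕ) - (t : ℕ)) :=
        Finset.sum_congr rfl fun t ht => by
          rw [hI₂ne t (Finset.ne_of_mem_erase ht)]
      rw [hI₂t₀] at e1
      omega
    have hs2 : ∑ t, ((I t : ℕ) + (t : ℕ)) = (∑ t, ((I₂ t : ℕ) + (t : ℕ))) + 1 := by
      have e1 : ((I₂ t₀ : ℕ) + (t₀ : ℕ)) + ∑ t ∈ Finset.univ.erase t₀, ((I₂ t : ℕ) + (t : ℕ))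
          = ∑ t, ((I₂ t : ℕ) + (t : ℕ)) :=
        Finset.add_sum_erase Finset.univ (fun t : Fin k => (I₂ t : ℕ) + (t : ℕ)) (Finset.mem_univ t₀)
      have e2 : ((I t₀ : ℕ) + (t₀ : ℕ)) + ∑ t ∈ Finset.univ.erase t₀, ((I t : ℕ) + (t : ℕ))
          = ∑ t, ((I t : ℕ) + (t : ℕ)) :=
        Finset.add_sum_erase Finset.univ (fun t : Fin k => (I t : ℕ) + (t : ℕ)) (Finset.mem_univ t₀)
      have e3 : ∑ t ∈ Finset.univ.erase t₀, ((I₂ t : ℕ) + (t : ℕ))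
          = ∑ t ∈ Finset.univ.erase t₀, ((I t : ℕ) + (t : ℕ)) :=
        Finset.sum_congr rfl fun t ht => by
          rw [hI₂ne t (Finset.ne_of_mem_erase ht)]
      rw [hI₂t₀] at e1
      omega
    rw [hperm]
    have : (shuffle hk I₂ hI₂).trans (Equiv.swap a b) = Equiv.swap a b * shuffle hk I₂ hI₂ := rfl
    rw [this, Equiv.Perm.sign_mul, Equiv.Perm.sign_swap hab, ih I₂ hI₂ hs1, hs2, pow_succ]
    exact mul_comm _ _

lemma sign_rho (hk : k ≤ n) (I J : Fin k → Fin n) (hI : StrictMono I) (hJ : StrictMono J) :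
    Equiv.Perm.sign ((sumEquiv hk J hJ).trans (sumEquiv hk I hI).symm)
      = (-1) ^ (∑ t, (I t : ℕ) + ∑ t, (J t : ℕ)) := by
  have hρ : (sumEquiv hk J hJ).trans (sumEquiv hk I hI).symm
      = (((gEquiv hk).symm.symm.trans
          ((shuffle hk J hJ).trans (shuffle hk I hI).symm)).trans (gEquiv hk).symm) := by
    apply Equiv.ext; intro p
    simp [shuffle]
  rw [hρ, Equiv.Perm.sign_symm_trans_trans]
  have : (shuffle hk J hJ).trans (shuffle hk I hI).symm
      = (shuffle hk I hI).symm * (shuffle hk J hJ) := rfl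
  rw [this, Equiv.Perm.sign_mul]
  have hsymm : Equiv.Perm.sign (shuffle hk I hI).symm = Equiv.Perm.sign (shuffle hk I hI) := by
    have : (shuffle hk I hI).symm = (shuffle hk I hI)⁻¹ := rfl
    rw [this, Equiv.Perm.sign_inv]
  rw [hsymm, sign_shuffle_aux hk _ I hI rfl, sign_shuffle_aux hk _ J hJ rfl, ← pow_add]
  have he : (∑ t : Fin k, ((I t : ℕ) + (t : ℕ))) + (∑ t : Fin k, ((J t : ℕ) + (t : ℕ)))
      = (∑ t, (I t : ℕ) + ∑ t, (J t : ℕ)) + 2 * ∑ t : Fin k, (t : ℕ) := by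
    rw [Finset.sum_add_distrib, Finset.sum_add_distrib]
    ring
  rw [he, pow_add, pow_mul, neg_one_sq, one_pow, mul_one]

end JacobiAux

open JacobiAux Matrix Equiv

theorem jacobi_determinant {F : Type*} [Field F] {n k : ℕ} (hk1 : 1 ≤ k) (hk : k ≤ n)
    (A : Matrix (Fin n) (Fin n) F) (hA : IsUnit A.det)
    (I J : Fin k → Fin n) (hI : StrictMono I) (hJ : StrictMono J) :
    ((Matrix.adjugate A).submatrix I J).det = cofactor A J I hJ hI * A.det ^ (k - 1) := by
  classical
  set B := Matrix.adjugate A with hB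
  set I' := monoCompl I hI.injective with hI'
  set J' := monoCompl J hJ.injective with hJ'
  set eI := sumEquiv hk I hI with heI
  set eJ := sumEquiv hk J hJ with heJ
  set X : Matrix (Fin n) (Fin n) F := Matrix.of fun i j =>
    Sum.elim (fun t => B i (J t)) (fun s => if i = I' s then (1 : F) else 0) (eI.symm j) with hX
  -- Step A
  have stepA : X.submatrix eI eI
      = Matrix.fromBlocks (B.submatrix I J) 0 (B.submatrix I' J) 1 := by
    ext p q
    have h1 : eI.symm (eI q) = q := eI.symm_apply_apply q
    cases p with
    | inl t' =>
      cases q with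
      | inl t => simp [hX, heI, hI', hJ', Matrix.submatrix_apply]
      | inr s =>
        simp only [hX, heI, Matrix.submatrix_apply, Matrix.of_apply,
          Equiv.symm_apply_apply, sumEquiv_symm_inl, sumEquiv_symm_inr, hI', hJ', Sum.elim_inr,
          Matrix.fromBlocks_apply₁₂, sumEquiv_inl, sumEquiv_inr, Matrix.zero_apply]
        rw [if_neg (fun hh => monoCompl_ne I hI.injective s t' hh.symm)]
    | inr s' =>
      cases q with
      | inl t => simp [hX, heI, hI', hJ', Matrix.submatrix_apply]
      | inr s =>
        simp only [hX, heI, Matrix.submatrix_apply, Matrix.of_apply,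
          Equiv.symm_apply_apply, sumEquiv_symm_inl, sumEquiv_symm_inr, hI', hJ', Sum.elim_inr,
          Matrix.fromBlocks_apply₂₂, sumEquiv_inr, Matrix.one_apply]
        by_cases hss : s' = s
        · simp [hss]
        · rw [if_neg (fun hh => hss ((monoCompl_strictMono I hI.injective).injective hh)),
            if_neg hss]
  -- Step B
  have stepB : A * X = Matrix.of fun i j =>
      Sum.elim (fun t => if i = J t then A.det else 0) (fun s => A i (I' s)) (eI.symm j) := by
    ext i j
    rw [Matrix.mul_apply]
    rcases hq : eI.symm j with t | s
    · simp only [hX, Matrix.of_apply, hq, Sum.elim_inl]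
      have h2 : ∑ l, A i l * B l (J t) = (A * B) i (J t) := (Matrix.mul_apply).symm
      rw [h2, hB, Matrix.mul_adjugate]
      simp [Matrix.smul_apply, Matrix.one_apply, mul_ite]
    · simp only [hX, Matrix.of_apply, hq, Sum.elim_inr]
      simp [mul_ite, mul_one, mul_zero]
  -- Step C
  have stepC : (A * X).submatrix eJ eI
      = Matrix.fromBlocks (A.det • (1 : Matrix (Fin k) (Fin k) F)) (A.submatrix J I')
          0 (A.submatrix J' I') := by
    ext p q
    cases p with
    | inl t' =>
      cases q with
      | inl t =>
        simp only [stepB, heI, heJ, Matrix.submatrix_apply, Matrix.of_apply,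
          Equiv.symm_apply_apply, sumEquiv_symm_inl, sumEquiv_symm_inr, hI', hJ', Sum.elim_inl,
          Matrix.fromBlocks_apply₁₁, Matrix.smul_apply, Matrix.one_apply, sumEquiv_inl,
          smul_eq_mul, mul_ite, mul_one, mul_zero]
        by_cases htt : t' = t
        · simp [htt]
        · rw [if_neg (fun hh => htt (hJ.injective hh)), if_neg htt]
      | inr s =>
        simp [stepB, heI, heJ, hI', hJ', Matrix.submatrix_apply]
    | inr s' =>
      cases q with
      | inl t =>
        simp only [stepB, heI, heJ, Matrix.submatrix_apply, Matrix.of_apply,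
          Equiv.symm_apply_apply, sumEquiv_symm_inl, sumEquiv_symm_inr, hI', hJ', Sum.elim_inl,
          Matrix.fromBlocks_apply₂₁, sumEquiv_inr, Matrix.zero_apply]
        rw [if_neg (monoCompl_ne J hJ.injective s' t)]
      | inr s =>
        simp [stepB, heI, heJ, hI', hJ', Matrix.submatrix_apply]
  -- determinants
  have dX : X.det = (B.submatrix I J).det := by
    rw [← Matrix.det_submatrix_equiv_self eI, stepA, Matrix.det_fromBlocks_zero₁₂,
      Matrix.det_one, mul_one]
  have dAX1 : ((A * X).submatrix eJ eI).det = A.det ^ k * (A.submatrix J' I').det := by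
    rw [stepC, Matrix.det_fromBlocks_zero₂₁, Matrix.det_smul, Matrix.det_one, mul_one,
      Fintype.card_fin]
  set ρ := eJ.trans eI.symm with hρ
  have dAX2 : ((A * X).submatrix eJ eI).det
      = ((Equiv.Perm.sign ρ : ℤ) : F) * (A.det * (B.submatrix I J).det) := by
    have hsub : (A * X).submatrix eJ eI = ((A * X).submatrix eI eI).submatrix ρ id := by
      ext p q
      simp [Matrix.submatrix_apply, hρ, Equiv.apply_symm_apply]
    rw [hsub, Matrix.det_permute, Matrix.det_submatrix_equiv_self, Matrix.det_mul, dX]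
  have hsign : ((Equiv.Perm.sign ρ : ℤ) : F)
      = (-1) ^ (∑ t, (I t : ℕ) + ∑ t, (J t : ℕ)) := by
    rw [hρ, heJ, heI, sign_rho hk I J hI hJ]
    push_cast
    norm_num
  set ε : F := (-1) ^ (∑ t, (I t : ℕ) + ∑ t, (J t : ℕ)) with hε
  have hε2 : ε * ε = 1 := by
    rw [hε, ← pow_add, ← two_mul, pow_mul, neg_one_sq, one_pow]
  have main : A.det * (B.submatrix I J).det = ε * (A.det ^ k * (A.submatrix J' I').det) := by
    have h3 := dAX1.symm.trans dAX2
    rw [hsign] at h3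
    calc A.det * (B.submatrix I J).det
        = ε * (ε * (A.det * (B.submatrix I J).det)) := by rw [← mul_assoc, hε2, one_mul]
      _ = ε * (A.det ^ k * (A.submatrix J' I').det) := by rw [← h3]
  have hdet : A.det ≠ 0 := fun h => by simp [h] at hA
  have hpow : A.det ^ k = A.det * A.det ^ (k - 1) := by
    conv_lhs => rw [show k = (k - 1) + 1 from (Nat.succ_pred_eq_of_pos hk1).symm]
    rw [pow_succ]
    ring
  have final : (B.submatrix I J).det = ε * (A.submatrix J' I').det * A.det ^ (k - 1) := by
    apply mul_left_cancel₀ hdet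
    rw [main, hpow]
    ring
  have hsg : ((-1 : F) ^ (∑ t, ((J t : ℕ) + 1) + ∑ t, ((I t : ℕ) + 1))) = ε := by
    rw [hε]
    have h1 : (∑ t : Fin k, ((J t : ℕ) + 1)) + (∑ t : Fin k, ((I t : ℕ) + 1))
        = (∑ t, (I t : ℕ) + ∑ t, (J t : ℕ)) + 2 * k := by
      rw [Finset.sum_add_distrib, Finset.sum_add_distrib]
      simp [Finset.card_univ]
      ring
    rw [h1, pow_add, pow_mul, neg_one_sq, one_pow, mul_one]
  have hcof : cofactor A J I hJ hI = ε * (A.submatrix J' I').det := by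
    unfold cofactor
    rw [← hI', ← hJ', hsg]
  rw [final, hcof]
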